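/- Let G be a 2-connected multigraph with spanning tree T and Y ⊆ E(G)∖T. If the auxiliary graph H^v_Y of a vertex v is bipartite, then its bipartition is unique (up to swapping the two sides). -/
import Mathlib


/-- A multigraph on vertex type `V` with edge type `E`: each edge has an
unordered pair of endpoints. -/
structure Multigraph (V E : Type) where
  ends : E → Sym2 V

namespace Multigraph

variable {V E : Type}

/-- Adjacency within the subgraph with edge set `F` and vertex set `S`. -/
def Adj (G : Multigraph V E) (F : Set E) (S : Set V) (a b : V) : Prop :=
  a ∈ S ∧ b ∈ S ∧ ∃ e ∈ F, G.ends e = s(a, b)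

/-- Reachability (lying in the same connected component) in the subgraph with
edge set `F` and vertex set `S`. -/
def Reach (G : Multigraph V E) (F : Set E) (S : Set V) : V → V → Prop :=
  Relation.ReflTransGen (G.Adj F S)

/-- `v` is `Y`-splittable: the auxiliary graph `H^v_Y`, whose vertices are the
connected components of `G` minus the edges `Y` and the vertex `v`, with edges
induced by `Y`-edges between components (loops for `Y`-edges within a
component), is bipartite.  This is expressed by a 2-colouring of the vertices
which is constant on the components of `G^v_Y` and proper on `Y`-edges not
incident to `v`. -/
def Splittable (G : Multigraph V E) (Y : Set E) (v : V) : Prop :=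
  ∃ c : V → Bool,
    (∀ a b : V, G.Reach (Set.univ \ Y) {v}ᶜ a b → c a = c b) ∧
    (∀ y ∈ Y, ∀ a b : V, G.ends y = s(a, b) → a ≠ v → b ≠ v → c a ≠ c b)

/-- `T` is a spanning tree of `G`: the subgraph `(V, T)` is connected and
every edge of `T` is a bridge of it. -/
def IsSpanningTree (G : Multigraph V E) (T : Set E) : Prop :=
  (∀ a b : V, G.Reach T Set.univ a b) ∧
  ∀ f ∈ T, ∃ a b : V, ¬ G.Reach (T \ {f}) Set.univ a b

/-- The set of tree edges lying on the tree path `P_{u,w}(T)` between `u` and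
`w`: a tree edge lies on this path iff deleting it separates `u` from `w`. -/
def pathEdges (G : Multigraph V E) (T : Set E) (u w : V) : Set E :=
  {f | f ∈ T ∧ ¬ G.Reach (T \ {f}) Set.univ u w}

/-- The fundamental path `P_e(T)` of an edge `e` (as a set of tree edges). -/
def fundPath (G : Multigraph V E) (T : Set E) (e : E) : Set E :=
  {f | f ∈ T ∧ ∀ a b : V, G.ends e = s(a, b) → ¬ G.Reach (T \ {f}) Set.univ a b}

/-- `v` lies on the tree path between `u` and `w`. -/
def OnPath (G : Multigraph V E) (T : Set E) (u w v : V) : Prop :=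
  v = u ∨ v = w ∨ ¬ G.Reach T {v}ᶜ u w

/-- `v` lies on the fundamental path `P_e(T)` of the edge `e`. -/
def OnFundPath (G : Multigraph V E) (T : Set E) (e : E) (v : V) : Prop :=
  ∀ a b : V, G.ends e = s(a, b) → G.OnPath T a b v

/-- The vertices covered by an edge set `F`. -/
def verts (G : Multigraph V E) (F : Set E) : Set V :=
  {v | ∃ e ∈ F, v ∈ G.ends e}

/-- `P⁻¹_{u,w}(G,T)`: the non-tree edges whose fundamental path contains the
tree path from `u` to `w`. -/
def Pinv (G : Multigraph V E) (T : Set E) (u w : V) : Set E :=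
  {e | e ∉ T ∧ G.pathEdges T u w ⊆ G.fundPath T e}

/-- A multigraph is simple if it has no loops and no parallel edges. -/
def Simple (G : Multigraph V E) : Prop :=
  (∀ e : E, ¬ (G.ends e).IsDiag) ∧ ∀ e f : E, G.ends e = G.ends f → e = f

/-- A `k`-separation: a partition of the edges into two parts, each of size at
least `k`, whose vertex sets share exactly `k` vertices. -/
def IsSep (G : Multigraph V E) (k : ℕ) (E1 E2 : Set E) : Prop :=
  E1 ∪ E2 = Set.univ ∧ Disjoint E1 E2 ∧ k ≤ E1.ncard ∧ k ≤ E2.ncard ∧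
    (G.verts E1 ∩ G.verts E2).ncard = k

/-- Tutte `k`-connectivity: connected and without `ℓ`-separations for
`1 ≤ ℓ < k`. -/
def TutteConnected (G : Multigraph V E) (k : ℕ) : Prop :=
  (∀ a b : V, G.Reach Set.univ Set.univ a b) ∧
  ∀ l : ℕ, 1 ≤ l → l < k → ¬ ∃ E1 E2 : Set E, G.IsSep l E1 E2

/-- A 2-separation with designated separating vertices `u` and `w`. -/
def IsTwoSep (G : Multigraph V E) (E1 E2 : Set E) (u w : V) : Prop :=
  E1 ∪ E2 = Set.univ ∧ Disjoint E1 E2 ∧ 2 ≤ E1.ncard ∧ 2 ≤ E2.ncard ∧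
    u ≠ w ∧ G.verts E1 ∩ G.verts E2 = {u, w}

/-- `v` is an articulation vertex of the subgraph with edge set `F`: after
removing `v` (and its incident edges), some two remaining vertices are
disconnected. -/
def ArticulationVertex (G : Multigraph V E) (F : Set E) (v : V) : Prop :=
  ∃ a b : V, a ≠ v ∧ b ≠ v ∧ ¬ G.Reach F {v}ᶜ a b

/-- The subgraph on the edge set `E1`, augmented by one new edge `{u, w}`. -/
def augment (G : Multigraph V E) (E1 : Set E) (u w : V) :
    Multigraph V (↥E1 ⊕ Unit) :=
  ⟨Sum.elim (fun e => G.ends e.1) (fun _ => s(u, w))⟩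

/-- The edge set `Q` of the intersection of the fundamental paths of all
edges in `Y`. -/
def Qedges (G : Multigraph V E) (T Y : Set E) : Set E :=
  ⋂ y ∈ Y, G.fundPath T y

end Multigraph


namespace Multigraph

lemma reach_symm {V E : Type} (G : Multigraph V E) {F : Set E} {S : Set V} {a b : V}
    (h : G.Reach F S a b) : G.Reach F S b a := by
  induction h with
  | refl => exact Relation.ReflTransGen.refl
  | tail _ hadj ih =>
    obtain ⟨hx, hy, e, heF, he⟩ := hadj
    exact Relation.ReflTransGen.head ⟨hy, hx, e, heF, by rw [he, Sym2.eq_swap]⟩ ih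

/-- If `s ≠ v` and `t` is reachable from `s` in `G` but not in `G - v`
(or `t = v`), then some edge joins the component of `s` in `G - v` to `v`. -/
lemma exists_vedge {V E : Type} (G : Multigraph V E) (v s t : V)
    (hs : s ≠ v) (h : G.Reach Set.univ Set.univ s t)
    (ht : ¬ (t ≠ v ∧ G.Reach Set.univ {v}ᶜ s t)) :
    ∃ (e : E) (x : V), x ≠ v ∧ G.Reach Set.univ {v}ᶜ s x ∧ G.ends e = s(x, v) := by
  induction h with
  | refl => exact absurd ⟨hs, Relation.ReflTransGen.refl⟩ ht
  | @tail x y hxy hadj ih =>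
    obtain ⟨-, -, e, -, he⟩ := hadj
    by_cases hx : x ≠ v ∧ G.Reach Set.univ {v}ᶜ s x
    · by_cases hyv : y = v
      · exact ⟨e, x, hx.1, hx.2, by rw [he, hyv]⟩
      · exact absurd ⟨hyv, hx.2.tail ⟨hx.1, hyv, e, Set.mem_univ e, he⟩⟩ ht
    · exact ih hx

/-- In a 2-connected multigraph, deleting any vertex leaves a connected graph. -/
lemma reach_avoid {V E : Type} [Fintype V] [Fintype E]
    (G : Multigraph V E) (h2 : G.TutteConnected 2) (v a b : V)
    (ha : a ≠ v) (hb : b ≠ v) : G.Reach Set.univ {v}ᶜ a b := by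
  by_contra hnr
  -- C = component of a in G - v
  set C : Set V := {x | x ≠ v ∧ G.Reach Set.univ {v}ᶜ a x} with hC
  have hedge : ∀ e : E, ∀ x y : V, G.ends e = s(x, y) → x ∈ C → y ≠ v → y ∈ C := by
    intro e x y he hx hy
    exact ⟨hy, hx.2.tail ⟨hx.1, hy, e, Set.mem_univ e, he⟩⟩
  set E1 : Set E := {e | ∃ x ∈ C, x ∈ G.ends e} with hE1
  obtain ⟨e₁, x₁, hx₁v, hx₁r, he₁⟩ :=
    G.exists_vedge v a b ha (h2.1 a b) (fun h => hnr h.2)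
  obtain ⟨e₂, x₂, hx₂v, hx₂r, he₂⟩ :=
    G.exists_vedge v b a hb (h2.1 b a)
      (fun h => hnr (G.reach_symm h.2))
  have he₁E1 : e₁ ∈ E1 := ⟨x₁, ⟨hx₁v, hx₁r⟩, by rw [he₁]; exact Sym2.mem_mk_left _ _⟩
  have he₂E1 : e₂ ∉ E1 := by
    rintro ⟨z, hzC, hz⟩
    rw [he₂, Sym2.mem_iff] at hz
    rcases hz with rfl | rfl
    · exact hnr (hzC.2.trans (G.reach_symm hx₂r))
    · exact hzC.1 rfl
  apply h2.2 1 le_rfl one_lt_two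
  refine ⟨E1, E1ᶜ, Set.union_compl_self E1, disjoint_compl_right, ?_, ?_, ?_⟩
  · exact (Set.ncard_pos (Set.toFinite E1)).mpr ⟨e₁, he₁E1⟩
  · exact (Set.ncard_pos (Set.toFinite E1ᶜ)).mpr ⟨e₂, he₂E1⟩
  · have : G.verts E1 ∩ G.verts E1ᶜ = {v} := by
      apply Set.eq_singleton_iff_unique_mem.mpr
      constructor
      · exact ⟨⟨e₁, he₁E1, by rw [he₁]; exact Sym2.mem_mk_right _ _⟩,
          ⟨e₂, he₂E1, by rw [he₂]; exact Sym2.mem_mk_right _ _⟩⟩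
      · rintro w ⟨⟨f₁, hf₁, hwf₁⟩, ⟨f₂, hf₂, hwf₂⟩⟩
        by_contra hwv
        -- w ∈ ends f₁ with f₁ ∈ E1 forces w ∈ C
        obtain ⟨⟨p, q⟩, hpq⟩ := (G.ends f₁).exists_rep
        have hpq' : G.ends f₁ = s(p, q) := hpq.symm
        obtain ⟨z, hzC, hz⟩ := hf₁
        rw [hpq', Sym2.mem_iff] at hz hwf₁
        have hwC : w ∈ C := by
          rcases hz with rfl | rfl <;> rcases hwf₁ with rfl | rfl
          · exact hzC
          · exact hedge f₁ z w hpq' hzC hwv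
          · exact hedge f₁ z w (by rw [hpq', Sym2.eq_swap]) hzC hwv
          · exact hzC
        exact hf₂ ⟨w, hwC, hwf₂⟩
    rw [this, Set.ncard_singleton]

end Multigraph

/-- For a 2-connected multigraph, if the auxiliary graph `H^v_Y` is bipartite
then its bipartition is unique up to swapping the two sides: any two valid
2-colourings induce the same partition of the components of `G^v_Y`. -/
theorem bipartition_unique {V E : Type} [Fintype V] [Fintype E]
    (G : Multigraph V E) (h2 : G.TutteConnected 2)
    (T : Set E) (hT : G.IsSpanningTree T)
    (Y : Set E) (hYT : ∀ y ∈ Y, y ∉ T) (v : V)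
    (c₁ c₂ : V → Bool)
    (h₁const : ∀ a b : V, G.Reach (Set.univ \ Y) {v}ᶜ a b → c₁ a = c₁ b)
    (h₁prop : ∀ y ∈ Y, ∀ a b : V, G.ends y = s(a, b) → a ≠ v → b ≠ v →
      c₁ a ≠ c₁ b)
    (h₂const : ∀ a b : V, G.Reach (Set.univ \ Y) {v}ᶜ a b → c₂ a = c₂ b)
    (h₂prop : ∀ y ∈ Y, ∀ a b : V, G.ends y = s(a, b) → a ≠ v → b ≠ v →
      c₂ a ≠ c₂ b) :
    ∀ a b : V, a ≠ v → b ≠ v → (c₁ a = c₁ b ↔ c₂ a = c₂ b) := by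
  intro a b ha hb
  have h := G.reach_avoid h2 v a b ha hb
  induction h with
  | refl => exact ⟨fun _ => rfl, fun _ => rfl⟩
  | @tail x y hxy hadj ih =>
    obtain ⟨hx, hy, e, -, he⟩ := hadj
    have hxv : x ≠ v := hx
    have hyv : y ≠ v := hy
    have step : (c₁ x = c₁ y ∧ c₂ x = c₂ y) ∨ (c₁ x ≠ c₁ y ∧ c₂ x ≠ c₂ y) := by
      by_cases heY : e ∈ Y
      · exact Or.inr ⟨h₁prop e heY x y he hxv hyv, h₂prop e heY x y he hxv hyv⟩
      · have hr : G.Reach (Set.univ \ Y) {v}ᶜ x y :=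
          Relation.ReflTransGen.single ⟨hxv, hyv, e, ⟨Set.mem_univ e, heY⟩, he⟩
        exact Or.inl ⟨h₁const x y hr, h₂const x y hr⟩
    have ih' := ih hxv
    revert ih' step
    cases c₁ a <;> cases c₁ x <;> cases c₁ y <;> cases c₂ a <;> cases c₂ x <;>
      cases c₂ y <;> decide
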